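/- For every M > 10, the Dynamic Iceline Budyko Model has exactly two equilibria with ice line in the unit interval: the set of pairs (T, η) with T : ℝ → ℝ bounded continuous, η ∈ [0,1], F(T,η)(y) = 0 for all y ∈ ℝ, and T(η) = T_c, is exactly {(T*(η₁), η₁), (T*(η₂), η₂)}, where η₁ < η₂ are the two roots of T*(η)(η) = T_c in [0,1]. -/

import Mathlib

noncomputable section

open scoped BoundedContinuousFunction

namespace Budyko

/-- Solar constant (W/m²). -/
def Q : ℝ := 343
/-- OLR constant A (W/m²). -/
def A : ℝ := 202
/-- OLR constant B (W/m²/°C). -/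
def B : ℝ := 1.9
/-- Transport constant C (W/m²/°C). -/
def C : ℝ := 3.04
/-- Critical temperature (°C). -/
def Tc : ℝ := -10

/-- Insolation distribution. -/
def s (y : ℝ) : ℝ := 1 - 0.241 * (3 * y ^ 2 - 1)

/-- Clamp to `[0,1]`. -/
def clamp (y : ℝ) : ℝ := min (max y 0) 1

/-- Insolation extended to the real line. -/
def sTilde (y : ℝ) : ℝ := s (clamp y)

/-- Iceline-dependent smooth albedo with steepness `M`. -/
def albedo (M η y : ℝ) : ℝ := 0.47 + 0.15 * Real.tanh (M * (clamp y - η))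

/-- The Budyko vector field `F(T,η)(y)`. -/
def F (M : ℝ) (T : ℝ →ᵇ ℝ) (η y : ℝ) : ℝ :=
  Q * sTilde y * (1 - albedo M η y) - (B + C) * T y - A + C * ∫ u in (0:ℝ)..1, T u

/-- `g(η) = ∫₀¹ Q s(y) (1 - a(η)(y)) dy`. -/
def g (M η : ℝ) : ℝ := ∫ y in (0:ℝ)..1, Q * s y * (1 - albedo M η y)

/-- The local equilibrium temperature profile `T*(η)(y)`. -/
def Tstar (M η y : ℝ) : ℝ :=
  (Q * sTilde y * (1 - albedo M η y) - A + (C / B) * (g M η - A)) / (B + C)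

/-- Membership in the class `G_L` of Lipschitz graphs. -/
def MemGL (L : ℝ) (Φ : ℝ → ℝ →ᵇ ℝ) : Prop :=
  ∀ ζ η : ℝ, ‖Φ ζ - Φ η‖ ≤ L * |ζ - η|

/-- A graph is `r`-admissible if `‖Φ‖_G ≤ r` and every `Φ(η)` is `r`-Lipschitz. -/
def Admissible (r : ℝ) (Φ : ℝ → ℝ →ᵇ ℝ) : Prop :=
  (∀ η : ℝ, ‖Φ η‖ ≤ r) ∧ ∀ η x z : ℝ, |Φ η x - Φ η z| ≤ r * |x - z|

/-- `Ψ` is a graph-transform image of `Φ` (time step `t`, slow parameter `ε`). -/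
def IsGTImage (M t ε : ℝ) (Φ Ψ : ℝ → ℝ →ᵇ ℝ) : Prop :=
  ∀ η ξ : ℝ, η = ξ + ε * t * (Φ ξ ξ - Tc) → ∀ y : ℝ, Ψ η y = Φ ξ y + t * F M (Φ ξ) ξ y

/-- `Φ` is a fixed point of the Budyko graph transform. -/
def IsGTFixed (M t ε : ℝ) (Φ : ℝ → ℝ →ᵇ ℝ) : Prop := IsGTImage M t ε Φ Φ

namespace Aux
open Real MeasureTheory intervalIntegral Set

lemma cosh_ne (x : ℝ) : Real.cosh x ≠ 0 := (Real.cosh_pos x).ne'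

lemma tanh_eq' (x : ℝ) :
    Real.tanh x = (Real.exp x - Real.exp (-x)) / (Real.exp x + Real.exp (-x)) := by
  have h : Real.exp x + Real.exp (-x) ≠ 0 := by positivity
  rw [Real.tanh_eq_sinh_div_cosh, Real.sinh_eq, Real.cosh_eq]
  field_simp

lemma tanh_lt_one (x : ℝ) : Real.tanh x < 1 := by
  rw [Real.tanh_eq_sinh_div_cosh, div_lt_one (Real.cosh_pos x)]
  exact Real.sinh_lt_cosh x

lemma neg_one_lt_tanh (x : ℝ) : -1 < Real.tanh x := by
  have := tanh_lt_one (-x)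
  rw [Real.tanh_neg] at this
  linarith

lemma hasDerivAt_tanh (x : ℝ) : HasDerivAt Real.tanh (1 / Real.cosh x ^ 2) x := by
  have h := (Real.hasDerivAt_sinh x).div (Real.hasDerivAt_cosh x) (cosh_ne x)
  have hf : Real.tanh = fun y => Real.sinh y / Real.cosh y :=
    funext fun y => Real.tanh_eq_sinh_div_cosh y
  rw [hf]
  have h2 := Real.cosh_sq_sub_sinh_sq x
  have h3 : Real.cosh x * Real.cosh x - Real.sinh x * Real.sinh x = 1 := by nlinarith [h2]
  rw [h3] at h
  exact h

lemma tanh_strictMono : StrictMono Real.tanh :=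
  strictMono_of_deriv_pos fun x => by
    rw [(hasDerivAt_tanh x).deriv]; positivity

lemma tanh_mono {a b : ℝ} (h : a ≤ b) : Real.tanh a ≤ Real.tanh b :=
  tanh_strictMono.monotone h

lemma tanh_nonneg {x : ℝ} (hx : 0 ≤ x) : 0 ≤ Real.tanh x := by
  have := tanh_mono hx
  rwa [Real.tanh_zero] at this

lemma tanh_ge (u : ℝ) : 1 - 2 * Real.exp (-(2 * u)) ≤ Real.tanh u := by
  have h1 : (0:ℝ) < Real.exp u + Real.exp (-u) := by positivity
  rw [tanh_eq', le_div_iff₀ h1]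
  have a1 : Real.exp (-(2 * u)) * Real.exp u = Real.exp (-u) := by
    rw [← Real.exp_add]; ring_nf
  have a2 : Real.exp (-(2 * u)) * Real.exp (-u) = Real.exp (-(3 * u)) := by
    rw [← Real.exp_add]; ring_nf
  nlinarith [Real.exp_pos (-(3 * u)), Real.exp_pos (-u)]

lemma sech_sq_le (x : ℝ) : 1 / Real.cosh x ^ 2 ≤ 4 * Real.exp (-(2 * x)) := by
  have h1 : Real.exp x / 2 ≤ Real.cosh x := by
    rw [Real.cosh_eq]; nlinarith [Real.exp_pos (-x)]
  have hp : (0:ℝ) < Real.exp x / 2 := by positivity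
  have h2 : (Real.exp x / 2) ^ 2 ≤ Real.cosh x ^ 2 := by nlinarith [Real.cosh_pos x]
  have h3 : (0:ℝ) < (Real.exp x / 2) ^ 2 := by positivity
  have h4 : 1 / Real.cosh x ^ 2 ≤ 1 / (Real.exp x / 2) ^ 2 :=
    one_div_le_one_div_of_le h3 h2
  have h5 : 1 / (Real.exp x / 2) ^ 2 = 4 * Real.exp (-(2 * x)) := by
    rw [show -(2*x) = -x + -x by ring, Real.exp_add, Real.exp_neg]
    field_simp
    ring
  rw [h5] at h4
  exact h4

lemma tanh_one_ge : (0.7615 : ℝ) ≤ Real.tanh 1 := by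
  have h := Real.exp_one_gt_d9
  have hp : (0:ℝ) < Real.exp 1 := Real.exp_pos 1
  have h1 : (0:ℝ) < Real.exp 1 + Real.exp (-1) := by positivity
  rw [tanh_eq', le_div_iff₀ h1]
  have hinv : Real.exp 1 * Real.exp (-1) = 1 := by
    rw [← Real.exp_add]; norm_num
  nlinarith [Real.exp_pos (-1)]

lemma exp_five_ge : (148.4 : ℝ) ≤ Real.exp 5 := by
  have h := Real.exp_one_gt_d9
  have h5 : Real.exp 1 ^ 5 = Real.exp 5 := by
    rw [← Real.exp_nat_mul]; norm_num
  have : (2.7182818283:ℝ) ^ 5 ≤ Real.exp 1 ^ 5 := by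
    apply pow_le_pow_left₀ (by norm_num) h.le
  rw [h5] at this
  nlinarith [this]

lemma tanh_25_ge : (0.9866 : ℝ) ≤ Real.tanh 2.5 := by
  have hp : (0:ℝ) < Real.exp 2.5 := Real.exp_pos _
  have h1 : (0:ℝ) < Real.exp 2.5 + Real.exp (-2.5) := by positivity
  rw [tanh_eq', le_div_iff₀ h1]
  have hsq : Real.exp 2.5 * Real.exp 2.5 = Real.exp 5 := by
    rw [← Real.exp_add]; norm_num
  have hinv : Real.exp 2.5 * Real.exp (-2.5) = 1 := by
    rw [← Real.exp_add]; norm_num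
  nlinarith [exp_five_ge, Real.exp_pos (-2.5)]

lemma continuous_s : Continuous s := by unfold s; continuity

lemma continuous_tanh : Continuous Real.tanh := by
  have hf : Real.tanh = fun y => Real.sinh y / Real.cosh y :=
    funext fun y => Real.tanh_eq_sinh_div_cosh y
  rw [hf]
  exact Real.continuous_sinh.div Real.continuous_cosh fun x => (Real.cosh_pos x).ne'

lemma cont_tanh_aff (M t : ℝ) : Continuous fun y : ℝ => Real.tanh (M * (y - t)) :=
  continuous_tanh.comp (by continuity)

lemma cont_sech (M t : ℝ) : Continuous fun y : ℝ => M / Real.cosh (M * (y - t)) ^ 2 :=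
  continuous_const.div
    ((Real.continuous_cosh.comp (by continuity)).pow 2)
    (fun y => (pow_pos (Real.cosh_pos _) 2).ne')

/-- FTC for `s`. -/
lemma integral_s (a b : ℝ) :
    ∫ y in a..b, s y = (1.241 * b - 0.241 * b ^ 3) - (1.241 * a - 0.241 * a ^ 3) := by
  apply intervalIntegral.integral_eq_sub_of_hasDerivAt
  · intro y _
    have h : HasDerivAt (fun x : ℝ => 1.241 * x - 0.241 * x ^ 3)
        (1.241 * 1 - 0.241 * (3 * y ^ 2)) y := by
      have h1 : HasDerivAt (fun x : ℝ => x) (1:ℝ) y := hasDerivAt_id y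
      have h2 : HasDerivAt (fun x : ℝ => x ^ 3) (3 * y ^ 2) y := by
        simpa using hasDerivAt_pow 3 y
      exact (h1.const_mul _).sub (h2.const_mul _)
    exact h.congr_deriv (by unfold s; ring)
  · exact (continuous_s.intervalIntegrable a b)

/-- FTC for sech². -/
lemma integral_sech (M t a b : ℝ) :
    ∫ y in a..b, M / Real.cosh (M * (y - t)) ^ 2
      = Real.tanh (M * (b - t)) - Real.tanh (M * (a - t)) := by
  apply intervalIntegral.integral_eq_sub_of_hasDerivAt
  · intro y _
    have h1 : HasDerivAt (fun z : ℝ => M * (z - t)) M y := by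
      simpa using ((hasDerivAt_id y).sub_const t).const_mul M
    have h2 := (hasDerivAt_tanh (M * (y - t))).comp y h1
    exact h2.congr_deriv (by ring)
  · exact (cont_sech M t).intervalIntegrable a b

/-- FTC for exponential. -/
lemma integral_exp_sub (c p a b : ℝ) (hc : 0 < c) :
    ∫ y in a..b, Real.exp (-(c * (p - y)))
      = Real.exp (-(c * (p - b))) / c - Real.exp (-(c * (p - a))) / c := by
  refine intervalIntegral.integral_eq_sub_of_hasDerivAt
    (f := fun z : ℝ => Real.exp (-(c * (p - z))) / c) (fun y _ => ?_) ?_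
  · have h1 : HasDerivAt (fun z : ℝ => -(c * (p - z))) c y := by
      exact (((hasDerivAt_id y).const_sub p).const_mul c).neg.congr_deriv (by ring)
    have h2 := ((Real.hasDerivAt_exp (-(c * (p - y)))).comp y h1).div_const c
    exact h2.congr_deriv (by rw [mul_div_assoc, div_self hc.ne', mul_one])
  · exact (Real.continuous_exp.comp (by continuity)).intervalIntegrable a b

/-- weighted exponential integral, left of t -/
lemma integral_wexp_left (M t : ℝ) (hM : 0 < M) (ht : 0 ≤ t) :
    ∫ y in (0:ℝ)..t, M * (t - y) * (4 * Real.exp (-(2 * M * (t - y)))) ≤ 1 / M := by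
  have hder : ∀ y ∈ Set.uIcc (0:ℝ) t,
      HasDerivAt (fun z : ℝ => (2 * (t - z) + 1 / M) * Real.exp (-(2 * M * (t - z))))
        (M * (t - y) * (4 * Real.exp (-(2 * M * (t - y))))) y := by
    intro y _
    have h1 : HasDerivAt (fun z : ℝ => -(2 * M * (t - z))) (2 * M) y := by
      exact (((hasDerivAt_id y).const_sub t).const_mul (2 * M)).neg.congr_deriv (by ring)
    have h2 := (Real.hasDerivAt_exp (-(2 * M * (t - y)))).comp y h1
    have h3 : HasDerivAt (fun z : ℝ => 2 * (t - z) + 1 / M) (-2) y := by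
      simpa using (((hasDerivAt_id y).const_sub t).const_mul (2:ℝ)).add_const (1/M)
    have h4 := h3.mul h2
    have hMne : M ≠ 0 := hM.ne'
    exact h4.congr_deriv (by simp only [Function.comp_apply]; linear_combination (2 * Real.exp (-(2 * M * (t - y)))) * (one_div_mul_cancel hMne))
  have hint : IntervalIntegrable
      (fun y : ℝ => M * (t - y) * (4 * Real.exp (-(2 * M * (t - y))))) volume 0 t := by
    apply Continuous.intervalIntegrable
    have : Continuous fun y : ℝ => Real.exp (-(2 * M * (t - y))) :=
      Real.continuous_exp.comp (by continuity)
    continuity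
  have key := intervalIntegral.integral_eq_sub_of_hasDerivAt hder hint
  rw [key]
  have e1 : (0:ℝ) ≤ (2 * (t - 0) + 1 / M) * Real.exp (-(2 * M * (t - 0))) := by
    apply mul_nonneg _ (Real.exp_nonneg _)
    have : (0:ℝ) < 1 / M := by positivity
    nlinarith
  have e2 : Real.exp (-(2 * M * (t - t))) = 1 := by simp
  rw [e2]
  nlinarith [e1]

lemma integral_wexp_right (M t : ℝ) (hM : 0 < M) (ht : t ≤ 1) :
    ∫ y in t..(1:ℝ), M * (y - t) * (4 * Real.exp (-(2 * M * (y - t)))) ≤ 1 / M := by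
  have hder : ∀ y ∈ Set.uIcc t (1:ℝ),
      HasDerivAt (fun z : ℝ => (-(2 * (z - t) + 1 / M)) * Real.exp (-(2 * M * (z - t))))
        (M * (y - t) * (4 * Real.exp (-(2 * M * (y - t))))) y := by
    intro y _
    have h1 : HasDerivAt (fun z : ℝ => -(2 * M * (z - t))) (-(2 * M)) y := by
      exact (((hasDerivAt_id y).sub_const t).const_mul (2 * M)).neg.congr_deriv (by ring)
    have h2 := (Real.hasDerivAt_exp (-(2 * M * (y - t)))).comp y h1
    have h3 : HasDerivAt (fun z : ℝ => -(2 * (z - t) + 1 / M)) (-2) y := by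
      exact ((((hasDerivAt_id y).sub_const t).const_mul (2:ℝ)).add_const (1/M)).neg.congr_deriv (by ring)
    have h4 := h3.mul h2
    have hMne : M ≠ 0 := hM.ne'
    exact h4.congr_deriv (by simp only [Function.comp_apply]; linear_combination (2 * Real.exp (-(2 * M * (y - t)))) * (one_div_mul_cancel hMne))
  have hint : IntervalIntegrable
      (fun y : ℝ => M * (y - t) * (4 * Real.exp (-(2 * M * (y - t))))) volume t 1 := by
    apply Continuous.intervalIntegrable
    have : Continuous fun y : ℝ => Real.exp (-(2 * M * (y - t))) :=
      Real.continuous_exp.comp (by continuity)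
    continuity
  have key := intervalIntegral.integral_eq_sub_of_hasDerivAt hder hint
  rw [key]
  have e2 : Real.exp (-(2 * M * (t - t))) = 1 := by simp
  rw [e2]
  have e1 : (0:ℝ) ≤ (2 * ((1:ℝ) - t) + 1 / M) * Real.exp (-(2 * M * ((1:ℝ) - t))) := by
    apply mul_nonneg _ (Real.exp_nonneg _)
    have : (0:ℝ) < 1 / M := by positivity
    nlinarith
  nlinarith [e1]

lemma s_nonneg {y : ℝ} (h0 : 0 ≤ y) (h1 : y ≤ 1) : 0 ≤ s y := by
  unfold s; nlinarith

lemma s_le (y : ℝ) : s y ≤ 1.241 := by unfold s; nlinarith [sq_nonneg y]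

/-- `G(η) = ∫₀¹ s(y) tanh(M(y-η)) dy`. -/
def GG (M η : ℝ) : ℝ := ∫ y in (0:ℝ)..1, s y * Real.tanh (M * (y - η))

/-- `K(t) = ∫₀¹ s(y) M sech²(M(y-t)) dy = -G'(t)`. -/
def KK (M t : ℝ) : ℝ := ∫ y in (0:ℝ)..1, s y * (M / Real.cosh (M * (y - t)) ^ 2)

/-- `P(η) = (B+C)·(T*(η)(η) - T_c)` for `η ∈ [0,1]`. -/
def P (M η : ℝ) : ℝ := 40.66539 - 131.43417 * η ^ 2 - 82.32 * GG M η

lemma cont_GGint (M x : ℝ) : Continuous fun y => s y * Real.tanh (M * (y - x)) :=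
  continuous_s.mul (cont_tanh_aff M x)

lemma cont_KKint (M x : ℝ) : Continuous fun y => s y * (M / Real.cosh (M * (y - x)) ^ 2) :=
  continuous_s.mul (cont_sech M x)

lemma hasDerivAt_GG (M : ℝ) (hM : 0 < M) (t : ℝ) :
    HasDerivAt (GG M) (-(KK M t)) t := by
  have h := intervalIntegral.hasDerivAt_integral_of_dominated_loc_of_deriv_le
    (F := fun x y => s y * Real.tanh (M * (y - x)))
    (F' := fun x y => s y * (-(M / Real.cosh (M * (y - x)) ^ 2)))
    (a := (0:ℝ)) (b := 1) (μ := volume) (x₀ := t) (bound := fun _ => 1.241 * M)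
    (s := Metric.ball t 1) (Metric.ball_mem_nhds t one_pos)
    (Filter.Eventually.of_forall fun x => (cont_GGint M x).aestronglyMeasurable)
    ((cont_GGint M t).intervalIntegrable 0 1)
    ((continuous_s.mul (cont_sech M t).neg).aestronglyMeasurable)
    (MeasureTheory.ae_of_all _ fun y hy x _ => ?_)
    intervalIntegrable_const
    (MeasureTheory.ae_of_all _ fun y _ x _ => ?_)
  · have h2 := h.2
    have e : (∫ y in (0:ℝ)..1, s y * (-(M / Real.cosh (M * (y - t)) ^ 2)))
        = -(KK M t) := by
      rw [show (fun y => s y * (-(M / Real.cosh (M * (y - t)) ^ 2)))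
          = fun y => -(s y * (M / Real.cosh (M * (y - t)) ^ 2)) from
        funext fun y => by ring]
      rw [intervalIntegral.integral_neg]
      rfl
    rw [e] at h2
    exact h2
  · -- bound
    have hy' : y ∈ Set.Ioc (0:ℝ) 1 := by
      rwa [Set.uIoc_of_le (by norm_num : (0:ℝ) ≤ 1)] at hy
    have h1 : |s y| ≤ 1.241 := by
      rw [abs_le]
      constructor
      · have := s_nonneg hy'.1.le hy'.2; linarith
      · exact s_le y
    have hc1 : (1:ℝ) ≤ Real.cosh (M * (y - x)) ^ 2 := by
      have := Real.one_le_cosh (M * (y - x))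
      nlinarith
    have h2 : |(-(M / Real.cosh (M * (y - x)) ^ 2))| ≤ M := by
      rw [abs_neg, abs_of_nonneg (by positivity)]
      calc M / Real.cosh (M * (y - x)) ^ 2 ≤ M / 1 := by
            apply div_le_div_of_nonneg_left hM.le one_pos hc1
        _ = M := div_one M
    calc ‖s y * (-(M / Real.cosh (M * (y - x)) ^ 2))‖
        = |s y| * |(-(M / Real.cosh (M * (y - x)) ^ 2))| := by
          rw [Real.norm_eq_abs, abs_mul]
      _ ≤ 1.241 * M := by
          apply mul_le_mul h1 h2 (abs_nonneg _) (by norm_num)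
  · -- differentiability
    have h1 : HasDerivAt (fun x : ℝ => M * (y - x)) (-M) x := by
      exact (((hasDerivAt_id x).const_sub y).const_mul M).congr_deriv (by ring)
    have h2 := (hasDerivAt_tanh (M * (y - x))).comp x h1
    have h3 := h2.const_mul (s y)
    exact h3.congr_deriv (by ring)

lemma hasDerivAt_P (M : ℝ) (hM : 0 < M) (t : ℝ) :
    HasDerivAt (P M) (-262.86834 * t + 82.32 * KK M t) t := by
  have h1 : HasDerivAt (fun x : ℝ => 40.66539 - 131.43417 * x ^ 2)
      (-262.86834 * t) t := by
    have h2 : HasDerivAt (fun x : ℝ => x ^ 2) (2 * t) t := by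
      simpa using hasDerivAt_pow 2 t
    have := (h2.const_mul (131.43417:ℝ)).const_sub (40.66539:ℝ)
    exact this.congr_deriv (by ring)
  have h2 := (hasDerivAt_GG M hM t).const_mul (82.32:ℝ)
  have h3 := h1.sub h2
  have : -262.86834 * t + 82.32 * KK M t
      = -262.86834 * t - 82.32 * -(KK M t) := by ring
  rw [this]
  exact h3

lemma continuous_P (M : ℝ) (hM : 0 < M) : Continuous (P M) :=
  continuous_iff_continuousAt.2 fun t => (hasDerivAt_P M hM t).continuousAt

/-- Lower bound for `K` on `[0, 0.3]`. -/
lemma KK_lb1 (M t : ℝ) (hM : 10 < M) (h0 : 0 ≤ t) (h3 : t ≤ 0.3) :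
    (1.0085 : ℝ) ≤ KK M t := by
  have hM0 : (0:ℝ) < M := by linarith
  have hii : ∀ a b : ℝ,
      IntervalIntegrable (fun y => s y * (M / Real.cosh (M * (y - t)) ^ 2)) volume a b :=
    fun a b => (cont_KKint M t).intervalIntegrable a b
  have split1 := intervalIntegral.integral_add_adjacent_intervals
    (hii 0 t) (hii t (t + 0.25))
  have split2 := intervalIntegral.integral_add_adjacent_intervals
    (hii 0 (t + 0.25)) (hii (t + 0.25) 1)
  have n1 : 0 ≤ ∫ y in (0:ℝ)..t, s y * (M / Real.cosh (M * (y - t)) ^ 2) := by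
    apply intervalIntegral.integral_nonneg h0
    intro u hu
    exact mul_nonneg (s_nonneg hu.1 (by linarith [hu.2])) (by positivity)
  have n2 : 0 ≤ ∫ y in (t + 0.25)..1, s y * (M / Real.cosh (M * (y - t)) ^ 2) := by
    apply intervalIntegral.integral_nonneg (by linarith)
    intro u hu
    exact mul_nonneg (s_nonneg (by linarith [hu.1]) hu.2) (by positivity)
  have mid : (1.0085 : ℝ) ≤ ∫ y in t..(t + 0.25), s y * (M / Real.cosh (M * (y - t)) ^ 2) := by
    have hmono : ∫ y in t..(t + 0.25), 1.0222925 * (M / Real.cosh (M * (y - t)) ^ 2)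
        ≤ ∫ y in t..(t + 0.25), s y * (M / Real.cosh (M * (y - t)) ^ 2) := by
      apply intervalIntegral.integral_mono_on (by linarith)
        ((continuous_const.mul (cont_sech M t)).intervalIntegrable _ _) (hii _ _)
      intro u hu
      have h1 : (1.0222925 : ℝ) ≤ s u := by
        unfold s; nlinarith [hu.1, hu.2]
      exact mul_le_mul_of_nonneg_right h1 (by positivity)
    have e : ∫ y in t..(t + 0.25), 1.0222925 * (M / Real.cosh (M * (y - t)) ^ 2)
        = 1.0222925 * Real.tanh (M * 0.25) := by
      rw [intervalIntegral.integral_const_mul, integral_sech]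
      rw [show t + 0.25 - t = (0.25:ℝ) by ring, show M * (0.25:ℝ) = M * 0.25 from rfl,
        sub_self, mul_zero, Real.tanh_zero, sub_zero]
    have htanh : (0.9866 : ℝ) ≤ Real.tanh (M * 0.25) := by
      have : (2.5:ℝ) ≤ M * 0.25 := by linarith
      linarith [tanh_mono this, tanh_25_ge]
    nlinarith [hmono, e.symm.le, htanh]
  have : KK M t = (∫ y in (0:ℝ)..t, s y * (M / Real.cosh (M * (y - t)) ^ 2))
      + (∫ y in t..(t + 0.25), s y * (M / Real.cosh (M * (y - t)) ^ 2))
      + (∫ y in (t + 0.25)..1, s y * (M / Real.cosh (M * (y - t)) ^ 2)) := by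
    unfold KK
    rw [split1, split2]
  linarith [this]

/-- Lower bound for `K` on `[0.3, 0.35]`. -/
lemma KK_lb2 (M t : ℝ) (hM : 10 < M) (h0 : 0.3 ≤ t) (h3 : t ≤ 0.35) :
    (1.935 : ℝ) ≤ KK M t := by
  have hM0 : (0:ℝ) < M := by linarith
  have hii : ∀ a b : ℝ,
      IntervalIntegrable (fun y => s y * (M / Real.cosh (M * (y - t)) ^ 2)) volume a b :=
    fun a b => (cont_KKint M t).intervalIntegrable a b
  have split1 := intervalIntegral.integral_add_adjacent_intervals
    (hii 0 (t - 0.25)) (hii (t - 0.25) (t + 0.25))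
  have split2 := intervalIntegral.integral_add_adjacent_intervals
    (hii 0 (t + 0.25)) (hii (t + 0.25) 1)
  have n1 : 0 ≤ ∫ y in (0:ℝ)..(t - 0.25), s y * (M / Real.cosh (M * (y - t)) ^ 2) := by
    apply intervalIntegral.integral_nonneg (by linarith)
    intro u hu
    exact mul_nonneg (s_nonneg hu.1 (by linarith [hu.2])) (by positivity)
  have n2 : 0 ≤ ∫ y in (t + 0.25)..1, s y * (M / Real.cosh (M * (y - t)) ^ 2) := by
    apply intervalIntegral.integral_nonneg (by linarith)
    intro u hu
    exact mul_nonneg (s_nonneg (by linarith [hu.1]) hu.2) (by positivity)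
  have mid : (1.935 : ℝ) ≤ ∫ y in (t - 0.25)..(t + 0.25),
      s y * (M / Real.cosh (M * (y - t)) ^ 2) := by
    have hmono : ∫ y in (t - 0.25)..(t + 0.25), 0.98072 * (M / Real.cosh (M * (y - t)) ^ 2)
        ≤ ∫ y in (t - 0.25)..(t + 0.25), s y * (M / Real.cosh (M * (y - t)) ^ 2) := by
      apply intervalIntegral.integral_mono_on (by linarith)
        ((continuous_const.mul (cont_sech M t)).intervalIntegrable _ _) (hii _ _)
      intro u hu
      have h1 : (0.98072 : ℝ) ≤ s u := by
        unfold s; nlinarith [hu.1, hu.2]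
      exact mul_le_mul_of_nonneg_right h1 (by positivity)
    have e : ∫ y in (t - 0.25)..(t + 0.25), 0.98072 * (M / Real.cosh (M * (y - t)) ^ 2)
        = 0.98072 * (2 * Real.tanh (M * 0.25)) := by
      rw [intervalIntegral.integral_const_mul, integral_sech]
      rw [show t + 0.25 - t = (0.25:ℝ) by ring, show t - 0.25 - t = -(0.25:ℝ) by ring]
      rw [show M * -(0.25:ℝ) = -(M * 0.25) by ring, Real.tanh_neg]
      ring
    have htanh : (0.9866 : ℝ) ≤ Real.tanh (M * 0.25) := by
      have : (2.5:ℝ) ≤ M * 0.25 := by linarith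
      linarith [tanh_mono this, tanh_25_ge]
    nlinarith [hmono, e.symm.le, htanh]
  have : KK M t = (∫ y in (0:ℝ)..(t - 0.25), s y * (M / Real.cosh (M * (y - t)) ^ 2))
      + (∫ y in (t - 0.25)..(t + 0.25), s y * (M / Real.cosh (M * (y - t)) ^ 2))
      + (∫ y in (t + 0.25)..1, s y * (M / Real.cosh (M * (y - t)) ^ 2)) := by
    unfold KK
    rw [split1, split2]
  linarith [this]

/-- Upper bound for `K` on `[0.7, 1]`. -/
lemma KK_ub (M t : ℝ) (hM : 10 < M) (h0 : 0.7 ≤ t) (h1 : t ≤ 1) :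
    KK M t ≤ 2 * s t + 0.1446 := by
  have hM0 : (0:ℝ) < M := by linarith
  have hii : ∀ a b : ℝ,
      IntervalIntegrable (fun y => s y * (M / Real.cosh (M * (y - t)) ^ 2)) volume a b :=
    fun a b => (cont_KKint M t).intervalIntegrable a b
  have hst : 0 ≤ s t := s_nonneg (by linarith) h1
  have split := intervalIntegral.integral_add_adjacent_intervals (hii 0 t) (hii t 1)
  -- right part
  have right : ∫ y in t..(1:ℝ), s y * (M / Real.cosh (M * (y - t)) ^ 2) ≤ s t := by
    have hmono : ∫ y in t..(1:ℝ), s y * (M / Real.cosh (M * (y - t)) ^ 2)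
        ≤ ∫ y in t..(1:ℝ), s t * (M / Real.cosh (M * (y - t)) ^ 2) := by
      apply intervalIntegral.integral_mono_on h1 (hii _ _)
        ((continuous_const.mul (cont_sech M t)).intervalIntegrable _ _)
      intro u hu
      have hsu : s u ≤ s t := by unfold s; nlinarith [hu.1, hu.2]
      exact mul_le_mul_of_nonneg_right hsu (by positivity)
    have e : ∫ y in t..(1:ℝ), s t * (M / Real.cosh (M * (y - t)) ^ 2)
        = s t * Real.tanh (M * (1 - t)) := by
      rw [intervalIntegral.integral_const_mul, integral_sech, sub_self, mul_zero,
        Real.tanh_zero, sub_zero]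
    have : s t * Real.tanh (M * (1 - t)) ≤ s t * 1 :=
      mul_le_mul_of_nonneg_left (tanh_lt_one _).le hst
    nlinarith [hmono, e.le, e.ge]
  -- left part
  have left : ∫ y in (0:ℝ)..t, s y * (M / Real.cosh (M * (y - t)) ^ 2)
      ≤ s t + 0.1446 := by
    have hmono : ∫ y in (0:ℝ)..t, s y * (M / Real.cosh (M * (y - t)) ^ 2)
        ≤ ∫ y in (0:ℝ)..t, (s t * (M / Real.cosh (M * (y - t)) ^ 2)
            + 1.446 * (M * (t - y) * (4 * Real.exp (-(2 * M * (t - y)))))) := by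
      apply intervalIntegral.integral_mono_on (by linarith) (hii _ _)
      · apply Continuous.intervalIntegrable
        have c1 : Continuous fun y : ℝ => Real.exp (-(2 * M * (t - y))) :=
          Real.continuous_exp.comp (by continuity)
        have c2 := cont_sech M t
        continuity
      · intro u hu
        have hsu : s u ≤ s t + 1.446 * (t - u) := by
          unfold s; nlinarith [hu.1, hu.2]
        have hse : M / Real.cosh (M * (u - t)) ^ 2
            ≤ M * (4 * Real.exp (-(2 * M * (t - u)))) := by
          have hc : Real.cosh (M * (u - t)) = Real.cosh (M * (t - u)) := by
            rw [show M * (u - t) = -(M * (t - u)) by ring, Real.cosh_neg]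
          have hb := sech_sq_le (M * (t - u))
          have heq : (-(2 * (M * (t - u)))) = -(2 * M * (t - u)) := by ring
          rw [heq] at hb
          rw [hc, div_eq_mul_one_div]
          exact mul_le_mul_of_nonneg_left hb hM0.le
        have hpos : (0:ℝ) < M / Real.cosh (M * (u - t)) ^ 2 := by positivity
        have htu : 0 ≤ t - u := by linarith [hu.2]
        calc s u * (M / Real.cosh (M * (u - t)) ^ 2)
            ≤ (s t + 1.446 * (t - u)) * (M / Real.cosh (M * (u - t)) ^ 2) :=
              mul_le_mul_of_nonneg_right hsu hpos.le
          _ = s t * (M / Real.cosh (M * (u - t)) ^ 2)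
              + 1.446 * (t - u) * (M / Real.cosh (M * (u - t)) ^ 2) := by ring
          _ ≤ s t * (M / Real.cosh (M * (u - t)) ^ 2)
              + 1.446 * (t - u) * (M * (4 * Real.exp (-(2 * M * (t - u))))) := by
              have := mul_le_mul_of_nonneg_left hse (by linarith : (0:ℝ) ≤ 1.446 * (t - u))
              linarith [this]
          _ = s t * (M / Real.cosh (M * (u - t)) ^ 2)
              + 1.446 * (M * (t - u) * (4 * Real.exp (-(2 * M * (t - u))))) := by ring
    have hadd : ∫ y in (0:ℝ)..t, (s t * (M / Real.cosh (M * (y - t)) ^ 2)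
          + 1.446 * (M * (t - y) * (4 * Real.exp (-(2 * M * (t - y))))))
        = (∫ y in (0:ℝ)..t, s t * (M / Real.cosh (M * (y - t)) ^ 2))
          + ∫ y in (0:ℝ)..t, 1.446 * (M * (t - y) * (4 * Real.exp (-(2 * M * (t - y))))) := by
      apply intervalIntegral.integral_add
      · exact ((continuous_const.mul (cont_sech M t)).intervalIntegrable _ _)
      · apply Continuous.intervalIntegrable
        have c1 : Continuous fun y : ℝ => Real.exp (-(2 * M * (t - y))) :=
          Real.continuous_exp.comp (by continuity)
        continuity
    have e1 : ∫ y in (0:ℝ)..t, s t * (M / Real.cosh (M * (y - t)) ^ 2)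
        = s t * Real.tanh (M * t) := by
      rw [intervalIntegral.integral_const_mul, integral_sech, sub_self, mul_zero,
        Real.tanh_zero]
      rw [show M * ((0:ℝ) - t) = -(M * t) by ring, Real.tanh_neg]
      ring
    have e2 : ∫ y in (0:ℝ)..t, 1.446 * (M * (t - y) * (4 * Real.exp (-(2 * M * (t - y)))))
        ≤ 1.446 * (1 / M) := by
      rw [intervalIntegral.integral_const_mul]
      have := integral_wexp_left M t hM0 (by linarith)
      nlinarith [this]
    have e3 : s t * Real.tanh (M * t) ≤ s t * 1 :=
      mul_le_mul_of_nonneg_left (tanh_lt_one _).le hst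
    have e4 : 1.446 * (1 / M) ≤ 0.1446 := by
      rw [mul_one_div]
      rw [div_le_iff₀ hM0]
      linarith
    linarith [hmono, hadd.le, hadd.ge, e1.le, e3, e2, e4]
  have : KK M t = (∫ y in (0:ℝ)..t, s y * (M / Real.cosh (M * (y - t)) ^ 2))
      + ∫ y in t..(1:ℝ), s y * (M / Real.cosh (M * (y - t)) ^ 2) := by
    unfold KK; rw [split]
  linarith [this]

/-- Upper bound for `G` on `[0,1]`. -/
lemma GG_ub (M η : ℝ) (hM : 10 < M) (h0 : 0 ≤ η) (h1 : η ≤ 1) :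
    GG M η ≤ 1.1241 - 2 * (1.241 * η - 0.241 * η ^ 3) := by
  have hM0 : (0:ℝ) < M := by linarith
  have hii : ∀ a b : ℝ,
      IntervalIntegrable (fun y => s y * Real.tanh (M * (y - η))) volume a b :=
    fun a b => (cont_GGint M η).intervalIntegrable a b
  have split := intervalIntegral.integral_add_adjacent_intervals (hii 0 η) (hii η 1)
  have right : ∫ y in η..(1:ℝ), s y * Real.tanh (M * (y - η))
      ≤ 1 - (1.241 * η - 0.241 * η ^ 3) := by
    have hmono : ∫ y in η..(1:ℝ), s y * Real.tanh (M * (y - η))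
        ≤ ∫ y in η..(1:ℝ), s y := by
      apply intervalIntegral.integral_mono_on h1 (hii _ _)
        (continuous_s.intervalIntegrable _ _)
      intro u hu
      have hs0 : 0 ≤ s u := s_nonneg (by linarith [hu.1]) hu.2
      nlinarith [tanh_lt_one (M * (u - η))]
    have e := integral_s η 1
    rw [e] at hmono
    nlinarith [hmono]
  have left : ∫ y in (0:ℝ)..η, s y * Real.tanh (M * (y - η))
      ≤ -(1.241 * η - 0.241 * η ^ 3) + 0.1241 := by
    have hmono : ∫ y in (0:ℝ)..η, s y * Real.tanh (M * (y - η))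
        ≤ ∫ y in (0:ℝ)..η, (-(s y) + 2.482 * Real.exp (-(2 * M * (η - y)))) := by
      apply intervalIntegral.integral_mono_on h0 (hii _ _)
      · apply Continuous.intervalIntegrable
        have c1 : Continuous fun y : ℝ => Real.exp (-(2 * M * (η - y))) :=
          Real.continuous_exp.comp (by continuity)
        exact continuous_s.neg.add (continuous_const.mul c1)
      · intro u hu
        have hs0 : 0 ≤ s u := s_nonneg hu.1 (by linarith [hu.2])
        have hs1 : s u ≤ 1.241 := s_le u
        have ht := tanh_ge (M * (η - u))
        have heq : (-(2 * (M * (η - u)))) = -(2 * M * (η - u)) := by ring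
        rw [heq] at ht
        have hneg : Real.tanh (M * (u - η)) = -Real.tanh (M * (η - u)) := by
          rw [show M * (u - η) = -(M * (η - u)) by ring, Real.tanh_neg]
        rw [hneg]
        have h2 := mul_le_mul_of_nonneg_left ht hs0
        have h3 : s u * Real.exp (-(2 * M * (η - u)))
            ≤ 1.241 * Real.exp (-(2 * M * (η - u))) :=
          mul_le_mul_of_nonneg_right hs1 (Real.exp_nonneg _)
        nlinarith [h2, h3]
    have hadd : ∫ y in (0:ℝ)..η, (-(s y) + 2.482 * Real.exp (-(2 * M * (η - y))))
        = (∫ y in (0:ℝ)..η, -(s y))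
          + ∫ y in (0:ℝ)..η, 2.482 * Real.exp (-(2 * M * (η - y))) := by
      apply intervalIntegral.integral_add
      · exact continuous_s.neg.intervalIntegrable _ _
      · apply Continuous.intervalIntegrable
        have c1 : Continuous fun y : ℝ => Real.exp (-(2 * M * (η - y))) :=
          Real.continuous_exp.comp (by continuity)
        exact continuous_const.mul c1
    have e1 : ∫ y in (0:ℝ)..η, -(s y) = -(1.241 * η - 0.241 * η ^ 3) := by
      rw [intervalIntegral.integral_neg, integral_s]
      ring
    have e2 : ∫ y in (0:ℝ)..η, 2.482 * Real.exp (-(2 * M * (η - y))) ≤ 0.1241 := by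
      rw [intervalIntegral.integral_const_mul]
      have e := integral_exp_sub (2 * M) η 0 η (by linarith)
      rw [e]
      have p1 : Real.exp (-(2 * M * (η - η))) = 1 := by
        rw [show -(2 * M * (η - η)) = 0 by ring, Real.exp_zero]
      rw [p1]
      have p2 : 0 < Real.exp (-(2 * M * (η - 0))) := Real.exp_pos _
      have p3 : (0:ℝ) < 2 * M := by linarith
      have p4 : 1 / (2 * M) ≤ 0.05 := by
        rw [div_le_iff₀ p3]; linarith
      have p5 : 0 ≤ Real.exp (-(2 * M * (η - 0))) / (2 * M) := by positivity
      nlinarith [p4, p5, p2]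
    linarith [hmono, hadd.le, e1.le, e1.ge, e2]
  have : GG M η = (∫ y in (0:ℝ)..η, s y * Real.tanh (M * (y - η)))
      + ∫ y in η..(1:ℝ), s y * Real.tanh (M * (y - η)) := by
    unfold GG; rw [split]
  nlinarith [this.le, this.ge, left, right]

/-- Lower bound for `G(0)`. -/
lemma GG0_lb (M : ℝ) (hM : 10 < M) : (0.667 : ℝ) ≤ GG M 0 := by
  have hii : ∀ a b : ℝ,
      IntervalIntegrable (fun y => s y * Real.tanh (M * (y - 0))) volume a b :=
    fun a b => (cont_GGint M 0).intervalIntegrable a b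
  have split := intervalIntegral.integral_add_adjacent_intervals (hii 0 0.1) (hii 0.1 1)
  have n1 : 0 ≤ ∫ y in (0:ℝ)..0.1, s y * Real.tanh (M * (y - 0)) := by
    apply intervalIntegral.integral_nonneg (by norm_num)
    intro u hu
    apply mul_nonneg (s_nonneg hu.1 (by linarith [hu.2]))
    apply tanh_nonneg
    nlinarith [hu.1]
  have part2 : (0.667 : ℝ) ≤ ∫ y in (0.1:ℝ)..1, s y * Real.tanh (M * (y - 0)) := by
    have hmono : ∫ y in (0.1:ℝ)..1, 0.7615 * s y
        ≤ ∫ y in (0.1:ℝ)..1, s y * Real.tanh (M * (y - 0)) := by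
      apply intervalIntegral.integral_mono_on (by norm_num)
        ((continuous_const.mul continuous_s).intervalIntegrable _ _) (hii _ _)
      intro u hu
      have hs0 : 0 ≤ s u := s_nonneg (by linarith [hu.1]) hu.2
      have h1 : (1:ℝ) ≤ M * (u - 0) := by nlinarith [hu.1]
      have h2 := tanh_mono h1
      show 0.7615 * s u ≤ s u * Real.tanh (M * (u - 0))
      nlinarith [tanh_one_ge, h2, hs0]
    have e : ∫ y in (0.1:ℝ)..1, 0.7615 * s y
        = 0.7615 * ((1.241 * 1 - 0.241 * 1 ^ 3) - (1.241 * 0.1 - 0.241 * 0.1 ^ 3)) := by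
      rw [intervalIntegral.integral_const_mul, integral_s]
    rw [e] at hmono
    nlinarith [hmono]
  have : GG M 0 = (∫ y in (0:ℝ)..0.1, s y * Real.tanh (M * (y - 0)))
      + ∫ y in (0.1:ℝ)..1, s y * Real.tanh (M * (y - 0)) := by
    unfold GG; rw [split]
  linarith [this]

/-- Lower bound for `G(1)`. -/
lemma GG1_lb (M : ℝ) (hM : 10 < M) : (-1 : ℝ) ≤ GG M 1 := by
  have hmono : ∫ y in (0:ℝ)..1, -(s y) ≤ ∫ y in (0:ℝ)..1, s y * Real.tanh (M * (y - 1)) := by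
    apply intervalIntegral.integral_mono_on (by norm_num)
      (continuous_s.neg.intervalIntegrable _ _) ((cont_GGint M 1).intervalIntegrable _ _)
    intro u hu
    have hs0 : 0 ≤ s u := s_nonneg hu.1 hu.2
    show -(s u) ≤ s u * Real.tanh (M * (u - 1))
    nlinarith [neg_one_lt_tanh (M * (u - 1))]
  have e : ∫ y in (0:ℝ)..1, -(s y) = -1 := by
    rw [intervalIntegral.integral_neg, integral_s]
    norm_num
  rw [e] at hmono
  exact hmono

lemma P0_neg (M : ℝ) (hM : 10 < M) : P M 0 < 0 := by
  have := GG0_lb M hM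
  unfold P
  nlinarith [this]

lemma P1_neg (M : ℝ) (hM : 10 < M) : P M 1 < 0 := by
  have := GG1_lb M hM
  unfold P
  nlinarith [this]

lemma P_mid_pos (M η : ℝ) (hM : 10 < M) (h0 : 0.35 ≤ η) (h1 : η ≤ 0.7) : 0 < P M η := by
  have h := GG_ub M η hM (by linarith) (by linarith)
  unfold P
  nlinarith [h, sq_nonneg (η - 0.35), sq_nonneg (η - 0.7), mul_nonneg (sub_nonneg.2 h0) (sub_nonneg.2 h1), mul_nonneg (mul_nonneg (sub_nonneg.2 h0) (sub_nonneg.2 h0)) (sub_nonneg.2 h1)]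

lemma P_strictMonoOn (M : ℝ) (hM : 10 < M) : StrictMonoOn (P M) (Set.Icc 0 0.35) := by
  have hM0 : (0:ℝ) < M := by linarith
  apply strictMonoOn_of_deriv_pos (convex_Icc _ _)
    ((continuous_P M hM0).continuousOn)
  intro x hx
  rw [interior_Icc] at hx
  rw [(hasDerivAt_P M hM0 x).deriv]
  rcases le_or_gt x 0.3 with h | h
  · have := KK_lb1 M x hM hx.1.le h
    nlinarith [this, hx.1]
  · have := KK_lb2 M x hM h.le hx.2.le
    nlinarith [this, hx.2]

lemma P_strictAntiOn (M : ℝ) (hM : 10 < M) : StrictAntiOn (P M) (Set.Icc 0.7 1) := by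
  have hM0 : (0:ℝ) < M := by linarith
  apply strictAntiOn_of_deriv_neg (convex_Icc _ _)
    ((continuous_P M hM0).continuousOn)
  intro x hx
  rw [interior_Icc] at hx
  rw [(hasDerivAt_P M hM0 x).deriv]
  have := KK_ub M x hM hx.1.le hx.2.le
  unfold s at this
  nlinarith [this, hx.1, hx.2]

/-- Existence and uniqueness of the two roots of `P` in `[0,1]`. -/
lemma P_roots (M : ℝ) (hM : 10 < M) :
    ∃ η₁ η₂ : ℝ, η₁ ∈ Set.Icc (0:ℝ) 0.35 ∧ η₂ ∈ Set.Icc (0.7:ℝ) 1 ∧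
      P M η₁ = 0 ∧ P M η₂ = 0 ∧
      ∀ η ∈ Set.Icc (0:ℝ) 1, P M η = 0 → η = η₁ ∨ η = η₂ := by
  have hM0 : (0:ℝ) < M := by linarith
  have hcont := continuous_P M hM0
  have h035 : (0:ℝ) < P M 0.35 := P_mid_pos M 0.35 hM le_rfl (by norm_num)
  have h07 : (0:ℝ) < P M 0.7 := P_mid_pos M 0.7 hM (by norm_num) le_rfl
  obtain ⟨η₁, hη₁mem, hP1⟩ :=
    intermediate_value_Icc (by norm_num : (0:ℝ) ≤ 0.35) hcont.continuousOn
      (⟨(P0_neg M hM).le, h035.le⟩ : (0:ℝ) ∈ Set.Icc (P M 0) (P M 0.35))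
  obtain ⟨η₂, hη₂mem, hP2⟩ :=
    intermediate_value_Icc' (by norm_num : (0.7:ℝ) ≤ 1) hcont.continuousOn
      (⟨(P1_neg M hM).le, h07.le⟩ : (0:ℝ) ∈ Set.Icc (P M 1) (P M 0.7))
  refine ⟨η₁, η₂, hη₁mem, hη₂mem, hP1, hP2, ?_⟩
  intro η hη hPη
  rcases le_or_gt η 0.35 with hcase | hcase
  · left
    have hmem : η ∈ Set.Icc (0:ℝ) 0.35 := ⟨hη.1, hcase⟩
    rcases lt_trichotomy η η₁ with h | h | h
    · exfalso
      have := P_strictMonoOn M hM hmem hη₁mem h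
      rw [hPη, hP1] at this
      exact lt_irrefl 0 this
    · exact h
    · exfalso
      have := P_strictMonoOn M hM hη₁mem hmem h
      rw [hPη, hP1] at this
      exact lt_irrefl 0 this
  · rcases le_or_gt η 0.7 with hcase2 | hcase2
    · exfalso
      have := P_mid_pos M η hM hcase.le hcase2
      rw [hPη] at this
      exact lt_irrefl 0 this
    · right
      have hmem : η ∈ Set.Icc (0.7:ℝ) 1 := ⟨hcase2.le, hη.2⟩
      rcases lt_trichotomy η η₂ with h | h | h
      · exfalso
        have := P_strictAntiOn M hM hmem hη₂mem h
        rw [hPη, hP2] at this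
        exact lt_irrefl 0 this
      · exact h
      · exfalso
        have := P_strictAntiOn M hM hη₂mem hmem h
        rw [hPη, hP2] at this
        exact lt_irrefl 0 this

lemma continuous_clamp : Continuous clamp :=
  (continuous_id.max continuous_const).min continuous_const

lemma continuous_sTilde : Continuous sTilde := continuous_s.comp continuous_clamp

lemma continuous_albedo (M η : ℝ) : Continuous fun y => albedo M η y := by
  unfold albedo
  exact continuous_const.add (continuous_const.mul
    (continuous_tanh.comp (continuous_const.mul (continuous_clamp.sub continuous_const))))

lemma cont_Fint (M η : ℝ) : Continuous fun y => Q * sTilde y * (1 - albedo M η y) :=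
  ((continuous_const.mul continuous_sTilde).mul
    (continuous_const.sub (continuous_albedo M η)))

lemma cont_Tstar (M η : ℝ) : Continuous fun y => Tstar M η y := by
  unfold Tstar
  exact (((cont_Fint M η).sub continuous_const).add continuous_const).div_const _

lemma clamp_eq {y : ℝ} (h0 : 0 ≤ y) (h1 : y ≤ 1) : clamp y = y := by
  unfold clamp
  rw [max_eq_left h0, min_eq_left h1]

/-- `g` in terms of `G`. -/
lemma g_eq (M η : ℝ) : g M η = 181.79 - 51.45 * GG M η := by
  unfold g GG
  have h1 : ∀ y ∈ Set.uIcc (0:ℝ) 1,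
      Q * s y * (1 - albedo M η y)
        = 181.79 * s y - 51.45 * (s y * Real.tanh (M * (y - η))) := by
    intro y hy
    rw [Set.uIcc_of_le (by norm_num : (0:ℝ) ≤ 1)] at hy
    unfold albedo Q
    rw [clamp_eq hy.1 hy.2]
    ring
  rw [intervalIntegral.integral_congr h1]
  rw [intervalIntegral.integral_sub ((continuous_const.fun_mul continuous_s).intervalIntegrable _ _)
    ((continuous_const.fun_mul (cont_GGint M η)).intervalIntegrable _ _)]
  rw [intervalIntegral.integral_const_mul, intervalIntegral.integral_const_mul, integral_s]
  norm_num

/-- On the diagonal, `T*(η)(η) - T_c = P(η)/(B+C)`. -/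
lemma Tstar_diag (M : ℝ) {η : ℝ} (hη : η ∈ Set.Icc (0:ℝ) 1) :
    Tstar M η η - Tc = P M η / 4.94 := by
  have hc : clamp η = η := clamp_eq hη.1 hη.2
  unfold Tstar sTilde albedo P Q A B C Tc
  rw [hc, g_eq]
  rw [sub_self, mul_zero, Real.tanh_zero]
  unfold s
  ring

/-- The integral of the local equilibrium profile. -/
lemma integral_Tstar (M η : ℝ) : ∫ y in (0:ℝ)..1, Tstar M η y = (g M η - A) / B := by
  have hg' : ∫ y in (0:ℝ)..1, Q * sTilde y * (1 - albedo M η y) = g M η := by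
    unfold g
    apply intervalIntegral.integral_congr
    intro y hy
    rw [Set.uIcc_of_le (by norm_num : (0:ℝ) ≤ 1)] at hy
    show Q * sTilde y * (1 - albedo M η y) = Q * s y * (1 - albedo M η y)
    unfold sTilde
    rw [clamp_eq hy.1 hy.2]
  have h1 : ∀ y ∈ Set.uIcc (0:ℝ) 1, Tstar M η y
      = (Q * sTilde y * (1 - albedo M η y)) * (1 / (B + C))
        + (-A + (C / B) * (g M η - A)) * (1 / (B + C)) := by
    intro y _
    unfold Tstar
    ring
  rw [intervalIntegral.integral_congr h1]
  rw [intervalIntegral.integral_add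
    (((cont_Fint M η).fun_mul continuous_const).intervalIntegrable _ _)
    (intervalIntegrable_const)]
  rw [intervalIntegral.integral_mul_const, hg', intervalIntegral.integral_const]
  unfold A B C
  norm_num
  ring

/-- The fixed point equation for `F` characterizes `T*`. -/
lemma F_eq_zero_iff (M : ℝ) (T : ℝ →ᵇ ℝ) (η : ℝ) :
    (∀ y, F M T η y = 0) ↔ ∀ y, T y = Tstar M η y := by
  have hg' : ∫ y in (0:ℝ)..1, Q * sTilde y * (1 - albedo M η y) = g M η := by
    unfold g
    apply intervalIntegral.integral_congr
    intro y hy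
    rw [Set.uIcc_of_le (by norm_num : (0:ℝ) ≤ 1)] at hy
    show Q * sTilde y * (1 - albedo M η y) = Q * s y * (1 - albedo M η y)
    unfold sTilde
    rw [clamp_eq hy.1 hy.2]
  constructor
  · intro hF
    have hBC : B + C ≠ 0 := by unfold B C; norm_num
    have key : (B + C) * (∫ u in (0:ℝ)..1, T u)
        = g M η - A + C * ∫ u in (0:ℝ)..1, T u := by
      have e1 : (B + C) * (∫ u in (0:ℝ)..1, T u)
          = ∫ y in (0:ℝ)..1, (B + C) * T y :=
        (intervalIntegral.integral_const_mul _ _).symm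
      have e2 : ∀ y ∈ Set.uIcc (0:ℝ) 1, (B + C) * T y
          = (Q * sTilde y * (1 - albedo M η y)) * 1
            + (-A + C * ∫ u in (0:ℝ)..1, T u) := by
        intro y _
        have h := hF y
        unfold F at h
        linarith [h]
      have e3 : ∫ y in (0:ℝ)..1, ((Q * sTilde y * (1 - albedo M η y)) * 1
            + (-A + C * ∫ u in (0:ℝ)..1, T u))
          = (∫ y in (0:ℝ)..1, Q * sTilde y * (1 - albedo M η y)) * 1
            + (1 - 0 : ℝ) • (-A + C * ∫ u in (0:ℝ)..1, T u) := by
        rw [intervalIntegral.integral_add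
          (((cont_Fint M η).fun_mul continuous_const).intervalIntegrable _ _)
          (intervalIntegrable_const)]
        rw [intervalIntegral.integral_mul_const, intervalIntegral.integral_const]
      rw [e1, intervalIntegral.integral_congr e2, e3, hg']
      simp [smul_eq_mul]
      ring
    have hI : (∫ u in (0:ℝ)..1, T u) = (g M η - A) / B := by
      unfold B C at key
      unfold B
      rw [eq_div_iff (by norm_num : (1.9:ℝ) ≠ 0)]
      linarith [key]
    intro y
    have h := hF y
    unfold F at h
    rw [hI] at h
    unfold Tstar
    have hB : (B : ℝ) ≠ 0 := by unfold B; norm_num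
    rw [eq_div_iff hBC]
    have : (C / B) * (g M η - A) = C * ((g M η - A) / B) := by
      field_simp
    rw [this]
    linarith [h]
  · intro hT y
    have hint : (∫ u in (0:ℝ)..1, T u) = (g M η - A) / B := by
      rw [intervalIntegral.integral_congr (fun u (_ : u ∈ Set.uIcc (0:ℝ) 1) => hT u)]
      exact integral_Tstar M η
    unfold F
    rw [hint, hT y]
    unfold Tstar
    have hB : (B : ℝ) ≠ 0 := by unfold B; norm_num
    have hBC : B + C ≠ 0 := by unfold B C; norm_num
    field_simp
    ring


end Aux

/-- For M > 10 the Dynamic Iceline Budyko Model has exactly two equilibria with iceline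
in the unit interval, namely (T*(η₁), η₁) and (T*(η₂), η₂). -/
theorem two_equilibria (M : ℝ) (hM : 10 < M) :
    ∃ η₁ η₂ : ℝ, η₁ ∈ Set.Icc (0:ℝ) 1 ∧ η₂ ∈ Set.Icc (0:ℝ) 1 ∧ η₁ < η₂ ∧
      Tstar M η₁ η₁ = Tc ∧ Tstar M η₂ η₂ = Tc ∧
      (∀ η ∈ Set.Icc (0:ℝ) 1, Tstar M η η = Tc → η = η₁ ∨ η = η₂) ∧
      ∀ (T : ℝ →ᵇ ℝ) (η : ℝ),
        ((η ∈ Set.Icc (0:ℝ) 1 ∧ (∀ y : ℝ, F M T η y = 0) ∧ T η = Tc) ↔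
          ((η = η₁ ∧ ∀ y : ℝ, T y = Tstar M η₁ y) ∨
           (η = η₂ ∧ ∀ y : ℝ, T y = Tstar M η₂ y))) := by
  classical
  obtain ⟨η₁, η₂, h1m, h2m, hP1, hP2, huniq⟩ := Aux.P_roots M hM
  have hη₁I : η₁ ∈ Set.Icc (0:ℝ) 1 := ⟨h1m.1, by linarith [h1m.2]⟩
  have hη₂I : η₂ ∈ Set.Icc (0:ℝ) 1 := ⟨by linarith [h2m.1], h2m.2⟩
  have hlt : η₁ < η₂ := by linarith [h1m.2, h2m.1]
  have hT1 : Tstar M η₁ η₁ = Tc := by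
    have h := Aux.Tstar_diag M hη₁I
    rw [hP1] at h
    norm_num at h
    linarith [h]
  have hT2 : Tstar M η₂ η₂ = Tc := by
    have h := Aux.Tstar_diag M hη₂I
    rw [hP2] at h
    norm_num at h
    linarith [h]
  have hTtoP : ∀ η ∈ Set.Icc (0:ℝ) 1, Tstar M η η = Tc → Aux.P M η = 0 := by
    intro η hη h
    have h2 := Aux.Tstar_diag M hη
    rw [h] at h2
    have h3 : Aux.P M η / 4.94 = 0 := by linarith [h2]
    rcases div_eq_zero_iff.mp h3 with h4 | h4
    · exact h4
    · norm_num at h4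
  refine ⟨η₁, η₂, hη₁I, hη₂I, hlt, hT1, hT2, ?_, ?_⟩
  · intro η hη h
    exact huniq η hη (hTtoP η hη h)
  · intro T η
    constructor
    · rintro ⟨hηI, hF, hTc⟩
      have hT := (Aux.F_eq_zero_iff M T η).1 hF
      have hP : Aux.P M η = 0 := hTtoP η hηI (by rw [← hT η]; exact hTc)
      rcases huniq η hηI hP with h | h
      · exact Or.inl ⟨h, fun y => by rw [hT y, h]⟩
      · exact Or.inr ⟨h, fun y => by rw [hT y, h]⟩
    · rintro (⟨h, hT⟩ | ⟨h, hT⟩)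
      · subst h
        exact ⟨hη₁I, (Aux.F_eq_zero_iff M T η).2 hT, by rw [hT η, hT1]⟩
      · subst h
        exact ⟨hη₂I, (Aux.F_eq_zero_iff M T η).2 hT, by rw [hT η, hT2]⟩

end Budyko
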